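/- For every integer n ≥ 1 the q-Genocchi polynomial G_{n,q} satisfies the q-difference equation Σ_{k=2}^{n} (q^{n-k-1} g_{k,q} / (2 [k]_q!)) · D_q^k G_{n,q}(x) − (q^{n-2}/2) D_q G_{n,q}(x) + q^{n-1} G_{n,q}(x) + x q^n D_q G_{n,q}(x) − [n]_q G_{n,q}(qx) = 0, as an identity of real polynomials in x (the sum is empty when n = 1). -/

import Mathlib

open Polynomial Finset

/-- The q-integer [n]_q = 1 + q + ... + q^(n-1). -/
noncomputable def qInt (q : ℝ) (n : ℕ) : ℝ := ∑ i ∈ Finset.range n, q ^ i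

/-- The q-factorial [n]_q! = [1]_q [2]_q ... [n]_q, with [0]_q! = 1. -/
noncomputable def qFact (q : ℝ) : ℕ → ℝ
  | 0 => 1
  | n + 1 => qFact q n * qInt q (n + 1)

/-- The q-binomial coefficient [n choose k]_q = [n]_q! / ([k]_q! [n-k]_q!). -/
noncomputable def qBinom (q : ℝ) (n k : ℕ) : ℝ := qFact q n / (qFact q k * qFact q (n - k))

/-- The q-derivative on real polynomials, determined by D_q(x^n) = [n]_q x^(n-1). -/
noncomputable def qDeriv (q : ℝ) (p : Polynomial ℝ) : Polynomial ℝ :=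
  p.sum fun n a => Polynomial.C (a * qInt q n) * Polynomial.X ^ (n - 1)

/-- The q-derivative on formal power series: `D_{q,t}(t^n) = [n]_q t^(n-1)`. -/
noncomputable def qDerivPS (q : ℝ) (f : PowerSeries ℝ) : PowerSeries ℝ :=
  PowerSeries.mk fun n => qInt q (n + 1) * PowerSeries.coeff (R := ℝ) (n + 1) f

/-- The q-exponential series `e_q(t) = Σ_{n≥0} t^n/[n]_q!`. -/
noncomputable def qExp (q : ℝ) : PowerSeries ℝ := PowerSeries.mk fun n => 1 / qFact q n

/-- The q-Genocchi polynomials `G_{n,q}(x) = Σ_{k=0}^n [n choose k]_q g_{k,q} x^(n-k)`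
attached to the q-Genocchi numbers (g_k). -/
noncomputable def qGenocchiPoly (q : ℝ) (g : ℕ → ℝ) (n : ℕ) : Polynomial ℝ :=
  ∑ k ∈ Finset.range (n + 1), Polynomial.C (qBinom q n k * g k) * Polynomial.X ^ (n - k)

section Aux
open PowerSeries

lemma qInt_zero (q : ℝ) : qInt q 0 = 0 := by simp [qInt]
lemma qInt_one (q : ℝ) : qInt q 1 = 1 := by simp [qInt]
lemma qInt_succ (q : ℝ) (n : ℕ) : qInt q (n+1) = qInt q n + q^n := Finset.sum_range_succ _ _
lemma qInt_add (q : ℝ) (a b : ℕ) : qInt q (a+b) = qInt q a + q^a * qInt q b := by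
  simp only [qInt, Finset.sum_range_add, pow_add, Finset.mul_sum]
lemma qInt_pos {q : ℝ} (hq : 0 < q) {n : ℕ} (hn : 1 ≤ n) : 0 < qInt q n := by
  obtain ⟨m, rfl⟩ := Nat.exists_eq_add_of_le' hn
  induction m with
  | zero => simp [qInt_one]
  | succ k ih =>
    rw [qInt_succ]
    have h1 := ih k.succ_pos
    positivity
lemma qFact_pos {q : ℝ} (hq : 0 < q) (n : ℕ) : 0 < qFact q n := by
  induction n with
  | zero => norm_num [qFact]
  | succ k ih => rw [qFact]; exact mul_pos ih (qInt_pos hq k.succ_pos)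
lemma qInt_geom (q : ℝ) (n : ℕ) : (q - 1) * qInt q n = q^n - 1 := by
  rw [qInt, mul_comm, geom_sum_mul]

lemma qFact_ne {q : ℝ} (hq : 0 < q) (n : ℕ) : qFact q n ≠ 0 := (qFact_pos hq n).ne'

lemma qDeriv_coeff (q : ℝ) (p : Polynomial ℝ) (m : ℕ) :
    (qDeriv q p).coeff m = qInt q (m+1) * p.coeff (m+1) := by
  rw [qDeriv, Polynomial.sum_def, Polynomial.finset_sum_coeff]
  simp only [Polynomial.coeff_C_mul, Polynomial.coeff_X_pow, mul_ite, mul_one, mul_zero]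
  rw [show (∑ n ∈ p.support, if m = n - 1 then p.coeff n * qInt q n else 0)
      = ∑ n ∈ p.support, if n = m + 1 then p.coeff n * qInt q n else 0 from
    Finset.sum_congr rfl fun n _ => by
      rcases eq_or_ne n (m+1) with h | h
      · subst h; rw [if_pos rfl, if_pos (by omega)]
      · rw [if_neg h]
        split_ifs with h2
        · have hn0 : n = 0 := by omega
          have hm0 : m = 0 := by omega
          subst hn0; simp [qInt_zero]
        · rfl]
  rw [Finset.sum_ite_eq' p.support (m+1)]
  split_ifs with h
  · ring
  · rw [Polynomial.notMem_support_iff.mp h]; ring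

lemma qDeriv_iterate_coeff {q : ℝ} (hq : 0 < q) (k : ℕ) (p : Polynomial ℝ) (m : ℕ) :
    ((qDeriv q)^[k] p).coeff m = qFact q (m+k) / qFact q m * p.coeff (m+k) := by
  induction k generalizing m with
  | zero => simp [div_self (qFact_ne hq m)]
  | succ k ih =>
    rw [Function.iterate_succ_apply', qDeriv_coeff, ih]
    have h2 : m + 1 + k = m + (k+1) := by omega
    rw [h2]
    have h1 : qFact q (m+1) = qFact q m * qInt q (m+1) := rfl
    rw [h1]
    have := qFact_ne hq m
    have := (qInt_pos hq (Nat.succ_le_succ (Nat.zero_le m))).ne'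
    field_simp

lemma qGenocchi_coeff (q : ℝ) (g : ℕ → ℝ) (n m : ℕ) :
    (qGenocchiPoly q g n).coeff m =
      if m ≤ n then qFact q n / (qFact q (n-m) * qFact q m) * g (n-m) else 0 := by
  rw [qGenocchiPoly, Polynomial.finset_sum_coeff]
  simp only [Polynomial.coeff_C_mul, Polynomial.coeff_X_pow, mul_ite, mul_one, mul_zero]
  rw [show (∑ k ∈ Finset.range (n+1), if m = n - k then qBinom q n k * g k else 0)
      = ∑ k ∈ Finset.range (n+1), if m ≤ n then (if k = n - m then qBinom q n k * g k else 0) else 0 from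
    Finset.sum_congr rfl fun k hk => by
      rw [Finset.mem_range] at hk
      split_ifs with h1 h2 h3 h3 <;> first | rfl | (exfalso; omega) | (subst h3; rfl)]
  by_cases hmn : m ≤ n
  · simp only [if_pos hmn]
    rw [Finset.sum_ite_eq' (Finset.range (n+1)) (n-m)]
    rw [if_pos (Finset.mem_range.mpr (by omega))]
    rw [qBinom, show n - (n - m) = m from by omega]
  · simp [hmn]

lemma comp_CqX_coeff (q : ℝ) (p : Polynomial ℝ) (m : ℕ) :
    (p.comp (Polynomial.C q * Polynomial.X)).coeff m = q ^ m * p.coeff m := by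
  rw [Polynomial.comp, Polynomial.eval₂_eq_sum, Polynomial.sum_def, Polynomial.finset_sum_coeff]
  simp only [mul_pow, ← Polynomial.C_pow, Polynomial.coeff_C_mul, Polynomial.coeff_X_pow,
    mul_ite, mul_one, mul_zero]
  rw [show (∑ n ∈ p.support, if m = n then p.coeff n * q ^ n else 0)
      = ∑ n ∈ p.support, if n = m then p.coeff n * q ^ n else 0 from
    Finset.sum_congr rfl fun n _ => by
      rcases eq_or_ne n m with h | h
      · subst h; rfl
      · rw [if_neg h, if_neg fun hh => h hh.symm]]
  rw [Finset.sum_ite_eq' p.support m]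
  split_ifs with h
  · ring
  · rw [Polynomial.notMem_support_iff.mp h]; ring

lemma qFact_zero (q : ℝ) : qFact q 0 = 1 := rfl
lemma qFact_succ (q : ℝ) (n : ℕ) : qFact q (n+1) = qFact q n * qInt q (n+1) := rfl
lemma qFact_one (q : ℝ) : qFact q 1 = 1 := by rw [qFact_succ, qFact_zero, qInt_one, one_mul]

section
variable {q : ℝ} (hq0 : 0 < q) (hq1 : q < 1) {g : ℕ → ℝ}
  (hg : (qExp q + 1) * PowerSeries.mk (fun n => g n / qFact q n) = 2 * PowerSeries.X)

include hg in
lemma g_zero : g 0 = 0 := by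
  have h := congrArg (PowerSeries.coeff (R := ℝ) 0) hg
  simp [PowerSeries.coeff_mul, Finset.Nat.antidiagonal_zero, qExp, qFact_zero] at h
  linarith

include hg in
lemma g_one : g 1 = 1 := by
  have h := congrArg (PowerSeries.coeff (R := ℝ) 1) hg
  rw [PowerSeries.coeff_mul, Finset.Nat.sum_antidiagonal_eq_sum_range_succ_mk] at h
  simp [qExp, qFact_zero, qFact_one, g_zero hg, Finset.sum_range_succ, map_ofNat] at h
  linarith
end

section
variable {q : ℝ} (hq0 : 0 < q) {g : ℕ → ℝ}
  (hg : (qExp q + 1) * PowerSeries.mk (fun n => g n / qFact q n) = 2 * PowerSeries.X)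

include hq0 hg in
lemma star (j : ℕ) :
    (q-1) * ∑ k ∈ Finset.range (j+2),
        (g k / qFact q k) * (q^(j+1-k) * g (j+1-k) / qFact q (j+1-k))
    = 2 * (q^(j+1) * g (j+1) / qFact q (j+1)) + 2*(q-1) * (q^j * g j / qFact q j)
      - 2*q*(g (j+1) / qFact q (j+1)) := by
  set F : PowerSeries ℝ := PowerSeries.mk fun n => g n / qFact q n with hF
  set G := rescale q F with hGdef
  have hGc : ∀ t, PowerSeries.coeff (R := ℝ) t G = q^t * g t / qFact q t := by
    intro t
    rw [hGdef, coeff_rescale]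
    simp [hF, mul_div_assoc]
  have hE' : rescale q (qExp q) = qExp q * (1 + (PowerSeries.C q - 1) * PowerSeries.X) := by
    ext t
    rcases t with _ | s
    · simp [coeff_rescale, qExp]
    · rw [coeff_rescale, mul_add, mul_one, map_add,
        show qExp q * ((PowerSeries.C q - 1) * PowerSeries.X)
          = PowerSeries.C q * (PowerSeries.X * qExp q) - PowerSeries.X * qExp q by ring,
        map_sub, PowerSeries.coeff_C_mul, PowerSeries.coeff_succ_X_mul]
      simp only [qExp, PowerSeries.coeff_mk]
      rw [qFact_succ]
      have h1 := qFact_ne hq0 s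
      have h2 := (qInt_pos hq0 (Nat.succ_le_succ (Nat.zero_le s))).ne'
      have h3 := qInt_geom q (s+1)
      field_simp
      linear_combination (-1) * h3
  have hB : (qExp q * (1 + (PowerSeries.C q - 1) * PowerSeries.X) + 1) * G
      = 2 * (PowerSeries.C q * PowerSeries.X) := by
    have h := congrArg (rescale q) hg
    rw [map_mul, map_add, map_one, hE', map_mul, PowerSeries.rescale_X, map_ofNat] at h
    exact h
  have hFG : PowerSeries.C q * (PowerSeries.X * (F * G)) - PowerSeries.X * (F * G)
      = (PowerSeries.X * G + PowerSeries.X * G)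
        + (PowerSeries.C q * (PowerSeries.X * (PowerSeries.X * G)) + PowerSeries.C q * (PowerSeries.X * (PowerSeries.X * G)))
        - (PowerSeries.X * (PowerSeries.X * G) + PowerSeries.X * (PowerSeries.X * G))
        - (PowerSeries.C q * (PowerSeries.X * F) + PowerSeries.C q * (PowerSeries.X * F)) := by
    linear_combination ((1 + (PowerSeries.C q - 1) * PowerSeries.X) * G) * hg - F * hB
  have hc := congrArg (PowerSeries.coeff (R := ℝ) (j+2)) hFG
  simp only [map_sub, map_add, PowerSeries.coeff_C_mul, PowerSeries.coeff_succ_X_mul] at hc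
  rw [PowerSeries.coeff_mul, Finset.Nat.sum_antidiagonal_eq_sum_range_succ_mk] at hc
  simp only [hGc, hF, PowerSeries.coeff_mk] at hc
  linarith [hc]
end

section
variable {q : ℝ} (hq0 : 0 < q) (hq1 : q < 1) {g : ℕ → ℝ}
  (hg : (qExp q + 1) * PowerSeries.mk (fun n => g n / qFact q n) = 2 * PowerSeries.X)

include hq0 hq1 hg in
lemma key (j : ℕ) :
    ∑ k ∈ Finset.Icc 2 (j+1), q^(j+1-k) * (g k * g (j+1-k)) / (qFact q k * qFact q (j+1-k))
    = 2*q*qInt q j * g (j+1) / qFact q (j+1)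
      + q^j * qInt q (j+1) * g j / qFact q (j+1) := by
  have hst := star hq0 hg j
  have hsplit : Finset.range (j+2) = insert 0 (insert 1 (Finset.Icc 2 (j+1))) := by
    ext x
    simp only [Finset.mem_range, Finset.mem_insert, Finset.mem_Icc]
    omega
  rw [hsplit, Finset.sum_insert (by simp), Finset.sum_insert (by simp [Finset.mem_Icc])] at hst
  rw [g_zero hg, g_one hg] at hst
  rw [show (∑ k ∈ Finset.Icc 2 (j+1),
        (g k / qFact q k) * (q^(j+1-k) * g (j+1-k) / qFact q (j+1-k)))
      = ∑ k ∈ Finset.Icc 2 (j+1),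
        q^(j+1-k) * (g k * g (j+1-k)) / (qFact q k * qFact q (j+1-k)) from
    Finset.sum_congr rfl fun k _ => by ring] at hst
  set S := ∑ k ∈ Finset.Icc 2 (j+1),
      q^(j+1-k) * (g k * g (j+1-k)) / (qFact q k * qFact q (j+1-k)) with hS
  simp only [Nat.add_sub_cancel, qFact_zero, qFact_one] at hst
  have hq1' : q - 1 ≠ 0 := sub_ne_zero.mpr (ne_of_lt hq1)
  have hfj := qFact_ne hq0 j
  have hIj1 := (qInt_pos hq0 (Nat.succ_le_succ (Nat.zero_le j))).ne'
  have hgeo := qInt_geom q j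
  have hkey' : (q-1) * (S * (qFact q j * qInt q (j+1))) * (qFact q j^3 * qInt q (j+1))
      = (q-1) * (2*q*qInt q j*g (j+1) + q^j * qInt q (j+1) * g j)
        * (qFact q j^3 * qInt q (j+1)) := by
    rw [qFact_succ] at hst
    field_simp at hst
    linear_combination (qFact q j^3 * qInt q (j+1)) * hst - (2*q*g (j+1)*qFact q j^3*qInt q (j+1)) * hgeo
  have hkey2 := mul_left_cancel₀ hq1'
    (mul_right_cancel₀ (mul_ne_zero (pow_ne_zero 3 hfj) hIj1) hkey')
  rw [qFact_succ, show 2*q*qInt q j * g (j+1) / (qFact q j * qInt q (j+1))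
      + q^j * qInt q (j+1) * g j / (qFact q j * qInt q (j+1))
    = (2*q*qInt q j * g (j+1) + q^j * qInt q (j+1) * g j) / (qFact q j * qInt q (j+1)) from
    (add_div _ _ _).symm]
  rw [eq_div_iff (mul_ne_zero hfj hIj1)]
  linear_combination hkey2

end
end Aux

/-- The q-Genocchi polynomial G_{n,q} satisfies the q-difference equation
`Σ_{k=2}^n (q^(n-k-1) g_{k,q}/(2 [k]_q!)) D_q^k G_{n,q}(x) − (q^(n-2)/2) D_q G_{n,q}(x)
  + q^(n-1) G_{n,q}(x) + x q^n D_q G_{n,q}(x) − [n]_q G_{n,q}(qx) = 0` for n ≥ 1. -/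
theorem qGenocchi_qDifference_equation (q : ℝ) (hq0 : 0 < q) (hq1 : q < 1)
    (g : ℕ → ℝ)
    (hg : (qExp q + 1) * PowerSeries.mk (fun n => g n / qFact q n) = 2 * PowerSeries.X)
    (n : ℕ) (hn : 1 ≤ n) :
    (∑ k ∈ Finset.Icc 2 n,
        Polynomial.C (q ^ (n - k) / q * g k / (2 * qFact q k))
          * (qDeriv q)^[k] (qGenocchiPoly q g n))
      - Polynomial.C (q ^ n / q ^ 2 / 2) * qDeriv q (qGenocchiPoly q g n)
      + Polynomial.C (q ^ (n - 1)) * qGenocchiPoly q g n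
      + Polynomial.C (q ^ n) * Polynomial.X * qDeriv q (qGenocchiPoly q g n)
      - Polynomial.C (qInt q n)
          * (qGenocchiPoly q g n).comp (Polynomial.C q * Polynomial.X) = 0 := by
  have hg0 := g_zero hg
  have hf : ∀ t, qFact q t ≠ 0 := qFact_ne hq0
  have hqne : q ≠ 0 := hq0.ne'
  apply Polynomial.ext
  intro m
  have hXcoeff : (Polynomial.C (q^n) * Polynomial.X * qDeriv q (qGenocchiPoly q g n)).coeff m
      = q^n * (qInt q m * (qGenocchiPoly q g n).coeff m) := by
    rw [mul_assoc, Polynomial.coeff_C_mul]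
    rcases m with _ | s
    · simp [Polynomial.coeff_X_mul_zero, qInt_zero]
    · rw [Polynomial.coeff_X_mul, qDeriv_coeff]
  rw [Polynomial.coeff_zero, Polynomial.coeff_sub, Polynomial.coeff_add, Polynomial.coeff_add,
    Polynomial.coeff_sub, hXcoeff, Polynomial.finset_sum_coeff]
  simp only [Polynomial.coeff_C_mul, qDeriv_coeff, comp_CqX_coeff,
    qDeriv_iterate_coeff hq0, qGenocchi_coeff]
  by_cases hmn : m ≤ n
  · -- main case
    set j := n - m with hj
    rw [show (∑ k ∈ Finset.Icc 2 n, q ^ (n - k) / q * g k / (2 * qFact q k) *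
          (qFact q (m + k) / qFact q m *
            (if m + k ≤ n then qFact q n / (qFact q (n - (m+k)) * qFact q (m+k)) * g (n - (m+k))
             else 0)))
        = ∑ k ∈ Finset.Icc 2 n, (if k ≤ j then
            (qFact q n / (2 * q * qFact q m) * q ^ (n - j)) *
              (q ^ (j - k) * (g k * g (j - k)) / (qFact q k * qFact q (j - k)))
           else 0) from
      Finset.sum_congr rfl fun k hk => by
        rw [Finset.mem_Icc] at hk
        by_cases hkj : k ≤ j
        · rw [if_pos (show m + k ≤ n by omega), if_pos hkj,
            show n - (m + k) = j - k by omega,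
            show n - k = (n - j) + (j - k) by omega, pow_add]
          field_simp [hf k, hf m, hf (m+k), hf (j-k)]
        · rw [if_neg (show ¬ m + k ≤ n by omega), if_neg hkj]
          ring]
    rw [show (∑ k ∈ Finset.Icc 2 n, if k ≤ j then
            (qFact q n / (2 * q * qFact q m) * q ^ (n - j)) *
              (q ^ (j - k) * (g k * g (j - k)) / (qFact q k * qFact q (j - k))) else 0)
        = (qFact q n / (2 * q * qFact q m) * q ^ (n - j)) *
            ∑ k ∈ Finset.Icc 2 j,
              q ^ (j - k) * (g k * g (j - k)) / (qFact q k * qFact q (j - k)) by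
      rw [← Finset.sum_filter, Finset.mul_sum]
      congr 1
      ext x
      simp only [Finset.mem_filter, Finset.mem_Icc]
      omega]
    rw [if_pos hmn]
    rcases Nat.eq_zero_or_eq_succ_pred j with hj0 | hjsucc
    · -- j = 0, i.e. m = n
      rw [hj0]
      rw [if_neg (show ¬ m + 1 ≤ n by omega)]
      rw [show Finset.Icc 2 0 = (∅ : Finset ℕ) from Finset.Icc_eq_empty (by omega)]
      simp [hg0]
    · set i := j - 1 with hi
      have hji : j = i + 1 := by omega
      have hmi : n = m + (i + 1) := by omega
      rw [hji, key hq0 hq1 hg i,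
        if_pos (show m + 1 ≤ n by omega),
        show n - (m+1) = i by omega,
        show n - (i+1) = m by omega,
        show n - 1 = m + i by omega,
        hmi,
        show m + (i+1) = (i+1) + m by ring]
      have h1 := qInt_add q (i+1) m
      have h2 := qInt_succ q i
      have hIi1 : qInt q (i+1) ≠ 0 := (qInt_pos hq0 (by omega)).ne'
      have hIm1 : qInt q (m+1) ≠ 0 := (qInt_pos hq0 (by omega)).ne'
      rw [qFact_succ q i, qFact_succ q m, h1]
      field_simp [hf i, hf m, hIi1, hIm1]
      ring_nf
      have hIi1' : qInt q (1+i) ≠ 0 := by rw [Nat.add_comm]; exact hIi1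
      have hIm1' : qInt q (1+m) ≠ 0 := by rw [Nat.add_comm]; exact hIm1
      field_simp [hf i, hf m, hIi1', hIm1']
      have h2' : qInt q (1+i) = qInt q i + q ^ i := by rw [Nat.add_comm]; exact h2
      linear_combination (-(2 * qFact q (1+i+m) * q^2 * q^m * g (1+i))) * h2'
  · -- m > n : everything vanishes
    rw [if_neg hmn, if_neg (show ¬ m + 1 ≤ n by omega)]
    rw [Finset.sum_eq_zero fun k hk => by
      rw [if_neg (show ¬ m + k ≤ n by rw [Finset.mem_Icc] at hk; omega)]
      ring]
    ring
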